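/- Let k be an algebraically closed field of characteristic 0 and d ≥ 2. A linear subspace L of the space R_d of binary forms of degree d lying entirely in the SL₂-nullcone (i.e., every form in L has a linear factor of multiplicity > d/2) is maximal among such subspaces if and only if L = l^{[d/2]+1}·R_{d-[d/2]-1} for some nonzero linear form l. -/

import Mathlib

open MvPolynomial

/-- A linear subspace of binary forms lies in the `SL₂`-nullcone of `R_d` iff every form
in it has a linear factor of multiplicity `> d/2`, i.e. is of the form `l^([d/2]+1)·h`. -/
def InNullcone (k : Type*) [Field k] (d : ℕ)
    (L : Submodule k (MvPolynomial (Fin 2) k)) : Prop :=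
  ∀ p ∈ L, ∃ l h : MvPolynomial (Fin 2) k,
    l.IsHomogeneous 1 ∧ l ≠ 0 ∧ p = l ^ (d / 2 + 1) * h

namespace Stmt12Aux

variable {k : Type*} [Field k]

lemma degree_fin_two (m : Fin 2 →₀ ℕ) : m.degree = m 0 + m 1 := by
  rw [Finsupp.degree_apply, Finset.sum_subset (Finset.subset_univ m.support)]
  · exact Fin.sum_univ_two m
  · intro i _ hi
    simpa using Finsupp.notMem_support_iff.mp hi

lemma eq_of_deg_eq {m d : Fin 2 →₀ ℕ} {n : ℕ} (hm : m.degree = n) (hd : d.degree = n)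
    (h0 : m 0 = d 0) : m = d := by
  rw [degree_fin_two] at hm hd
  ext i
  match i with
  | 0 => exact h0
  | 1 => omega

/-- Dehomogenization: substitute `y = 1`. -/
noncomputable def D : MvPolynomial (Fin 2) k →ₐ[k] Polynomial k :=
  aeval ![Polynomial.X, 1]

lemma D_apply (p : MvPolynomial (Fin 2) k) :
    D p = ∑ m ∈ p.support, Polynomial.C (coeff m p) * Polynomial.X ^ m 0 := by
  rw [D, aeval_def, eval₂_eq']
  refine Finset.sum_congr rfl fun m _ => ?_
  rw [Fin.prod_univ_two]
  simp [Polynomial.algebraMap_eq]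

lemma D_eq_zero {p : MvPolynomial (Fin 2) k} {n : ℕ} (hp : p.IsHomogeneous n)
    (h : D p = 0) : p = 0 := by
  by_contra hne
  obtain ⟨m, hm⟩ := MvPolynomial.ne_zero_iff.mp hne
  have hmem : m ∈ p.support := MvPolynomial.mem_support_iff.mpr hm
  have hc : (D p).coeff (m 0) = coeff m p := by
    rw [D_apply, Polynomial.finset_sum_coeff]
    rw [Finset.sum_eq_single m]
    · simp
    · intro d hd hdm
      have hdeg : d.degree = n := by
        by_contra hne'
        exact (MvPolynomial.mem_support_iff.mp hd) (hp.coeff_eq_zero hne')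
      have hmdeg : m.degree = n := by
        by_contra hne'
        exact hm (hp.coeff_eq_zero hne')
      simp only [Polynomial.coeff_C_mul, Polynomial.coeff_X_pow]
      rw [if_neg, mul_zero]
      intro he
      exact hdm (eq_of_deg_eq hdeg hmdeg he.symm)
    · intro h'
      exact absurd hmem h'
  rw [h, Polynomial.coeff_zero] at hc
  exact hm hc.symm

lemma factor_homog {f g p : MvPolynomial (Fin 2) k} {e n : ℕ} (hp : p.IsHomogeneous n)
    (hf : f.IsHomogeneous e) (hfg : p = f * g) (hp0 : p ≠ 0) :
    ∃ j, g.IsHomogeneous j ∧ e + j = n := by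
  have hfne : f ≠ 0 := fun h => hp0 (by simp [hfg, h])
  have hgne : g ≠ 0 := fun h => hp0 (by simp [hfg, h])
  set N := g.totalDegree with hN
  have hsum : ∑ i ∈ Finset.range (N + 1), homogeneousComponent i g = g :=
    sum_homogeneousComponent g
  have hkey : ∀ i, homogeneousComponent i g ≠ 0 → e + i = n := by
    intro i hi
    by_contra hne
    have hcomp : homogeneousComponent (e + i) p = f * homogeneousComponent i g := by
      conv_lhs => rw [hfg, ← hsum, Finset.mul_sum, map_sum]
      rw [Finset.sum_eq_single i]
      · rw [homogeneousComponent_of_mem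
          ((mem_homogeneousSubmodule _ _).mpr
            (hf.mul (homogeneousComponent_isHomogeneous i g)))]
        exact if_pos rfl
      · intro j _ hj
        rw [homogeneousComponent_of_mem
          ((mem_homogeneousSubmodule _ _).mpr
            (hf.mul (homogeneousComponent_isHomogeneous j g)))]
        exact if_neg (by omega)
      · intro hiN
        have : homogeneousComponent i g = 0 := by
          apply homogeneousComponent_eq_zero
          simp only [Finset.mem_range, not_lt] at hiN
          omega
        rw [this, mul_zero, map_zero]
    have hzero : homogeneousComponent (e + i) p = 0 := by
      rw [homogeneousComponent_of_mem ((mem_homogeneousSubmodule _ _).mpr hp)]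
      exact if_neg hne
    rw [hzero] at hcomp
    exact hi (by
      rcases mul_eq_zero.mp hcomp.symm with h | h
      · exact absurd h hfne
      · exact h)
  have hex : ∃ i, homogeneousComponent i g ≠ 0 := by
    by_contra hall
    push_neg at hall
    apply hgne
    rw [← hsum]
    exact Finset.sum_eq_zero fun i _ => hall i
  obtain ⟨j, hj⟩ := hex
  refine ⟨j, ?_, hkey j hj⟩
  rw [← hsum]
  have : ∀ i ∈ Finset.range (N + 1), homogeneousComponent i g ∈
      homogeneousSubmodule (Fin 2) k j := by
    intro i _
    by_cases hi : homogeneousComponent i g = 0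
    · rw [hi]; exact Submodule.zero_mem _
    · have := hkey i hi
      have hij : i = j := by have := hkey j hj; omega
      rw [hij]
      exact homogeneousComponent_mem j g
  exact Submodule.sum_mem _ this

lemma linear_rep {l : MvPolynomial (Fin 2) k} (hl : l.IsHomogeneous 1) :
    l = C (coeff (Finsupp.single 0 1) l) * X 0 + C (coeff (Finsupp.single 1 1) l) * X 1 := by
  have hs0 : (Finsupp.single (0 : Fin 2) 1).degree = 1 := by
    rw [degree_fin_two]; simp
  have hs1 : (Finsupp.single (1 : Fin 2) 1).degree = 1 := by
    rw [degree_fin_two]; simp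
  apply MvPolynomial.ext
  intro m
  rw [coeff_add]
  rw [show (C (coeff (Finsupp.single 0 1) l) * X 0 : MvPolynomial (Fin 2) k)
      = monomial (Finsupp.single 0 1) (coeff (Finsupp.single 0 1) l) by
        rw [X, C_mul_monomial, mul_one],
    show (C (coeff (Finsupp.single 1 1) l) * X 1 : MvPolynomial (Fin 2) k)
      = monomial (Finsupp.single 1 1) (coeff (Finsupp.single 1 1) l) by
        rw [X, C_mul_monomial, mul_one]]
  rw [coeff_monomial, coeff_monomial]
  by_cases hm : m.degree = 1
  · have h01 : m = Finsupp.single 0 1 ∨ m = Finsupp.single 1 1 := by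
      rw [degree_fin_two] at hm
      rcases Nat.eq_zero_or_pos (m 0) with h0 | h0
      · right
        exact eq_of_deg_eq (by rw [degree_fin_two]; omega) hs1 (by simp [h0])
      · left
        exact eq_of_deg_eq (by rw [degree_fin_two]; omega) hs0 (by simp; omega)
    rcases h01 with rfl | rfl
    · rw [if_pos rfl, if_neg, add_zero]
      intro h
      simpa using congrArg (fun f : Fin 2 →₀ ℕ => f 0) h
    · rw [if_pos rfl, if_neg, zero_add]
      intro h
      simpa using congrArg (fun f : Fin 2 →₀ ℕ => f 0) h
  · rw [hl.coeff_eq_zero hm, if_neg (fun h : (Finsupp.single 0 1 : Fin 2 →₀ ℕ) = m => hm (h ▸ hs0)),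
      if_neg (fun h : (Finsupp.single 1 1 : Fin 2 →₀ ℕ) = m => hm (h ▸ hs1))]
    simp

lemma homog_zero_eq_C {u : MvPolynomial (Fin 2) k} (hu : u.IsHomogeneous 0) :
    u = C (coeff 0 u) := by
  have h := homogeneousComponent_of_mem ((mem_homogeneousSubmodule _ _).mpr hu) (m := 0)
  rw [if_pos rfl] at h
  conv_lhs => rw [← h]
  rw [homogeneousComponent_zero]

lemma linear_dvd {l1 l2 : MvPolynomial (Fin 2) k} (h1 : l1.IsHomogeneous 1)
    (h2 : l2.IsHomogeneous 1) (h20 : l2 ≠ 0) (hdvd : l1 ∣ l2) :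
    ∃ c : k, c ≠ 0 ∧ l2 = C c * l1 := by
  obtain ⟨u, hu⟩ := hdvd
  obtain ⟨j, hj, hj1⟩ := factor_homog h2 h1 hu h20
  have hj0 : j = 0 := by omega
  subst hj0
  have hC := homog_zero_eq_C hj
  refine ⟨coeff 0 u, ?_, ?_⟩
  · intro hc
    rw [hc, map_zero] at hC
    rw [hu, hC, mul_zero] at h20
    exact h20 rfl
  · conv_lhs => rw [hu, hC]
    exact mul_comm _ _

lemma prime_linear_aux (a b : k) (ha : a ≠ 0) :
    Prime (C a * X 0 + C b * X 1 : MvPolynomial (Fin 2) k) := by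
  rw [← MulEquiv.prime_iff (finSuccEquiv k 1).toMulEquiv]
  have h1 : (1 : Fin 2) = Fin.succ 0 := rfl
  have hCa : (finSuccEquiv k 1) (C a) = Polynomial.C (C a) := by
    simp [finSuccEquiv_apply]
  have hCb : (finSuccEquiv k 1) (C b) = Polynomial.C (C b) := by
    simp [finSuccEquiv_apply]
  have hcoef : (C a : MvPolynomial (Fin 1) k) * (C (-(b/a)) * X 0) = -(C b * X 0) := by
    rw [← mul_assoc, ← C_mul]
    have : a * -(b / a) = -b := by field_simp
    rw [this, map_neg, neg_mul]
  have himg : (finSuccEquiv k 1) (C a * X 0 + C b * X 1) =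
      (Polynomial.X - Polynomial.C (C (-(b/a)) * X 0)) * Polynomial.C (C a) := by
    rw [map_add, map_mul, map_mul, h1, finSuccEquiv_X_zero, finSuccEquiv_X_succ, hCa, hCb]
    have hterm : (Polynomial.C (C (-(b/a)) * X 0) * Polynomial.C (C a)
        : Polynomial (MvPolynomial (Fin 1) k)) = - Polynomial.C (C b * X 0) := by
      rw [← Polynomial.C_mul, mul_comm, hcoef, map_neg]
    rw [sub_mul, mul_comm Polynomial.X, hterm, sub_neg_eq_add, ← Polynomial.C_mul]
  show Prime ((finSuccEquiv k 1) (C a * X 0 + C b * X 1))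
  rw [himg]
  have hu : IsUnit (Polynomial.C (C a) : Polynomial (MvPolynomial (Fin 1) k)) :=
    IsUnit.of_mul_eq_one (Polynomial.C (C a⁻¹)) (by
      rw [← Polynomial.C_mul, ← C_mul, mul_inv_cancel₀ ha, map_one, map_one])
  exact (associated_mul_unit_left _ _ hu).symm.prime (Polynomial.prime_X_sub_C _)

lemma linear_prime {l : MvPolynomial (Fin 2) k} (hl : l.IsHomogeneous 1) (h0 : l ≠ 0) :
    Prime l := by
  have hrep := linear_rep hl
  set a := coeff (Finsupp.single 0 1) l with ha'
  set b := coeff (Finsupp.single 1 1) l with hb'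
  by_cases ha : a ≠ 0
  · rw [hrep]; exact prime_linear_aux a b ha
  · push_neg at ha
    have hb : b ≠ 0 := by
      intro hb
      apply h0
      rw [hrep, ha, hb]; simp
    have h := prime_linear_aux b 0 hb
    rw [map_zero, zero_mul, add_zero] at h
    have hswap : (renameEquiv k (Equiv.swap (0 : Fin 2) 1)) (C b * X 0) = C b * X 1 := by
      simp [renameEquiv_apply, rename_C, rename_X]
    have hlval : l = C b * X 1 := by rw [hrep, ha]; simp
    rw [hlval, ← hswap]
    exact (MulEquiv.prime_iff (renameEquiv k (Equiv.swap (0 : Fin 2) 1)).toMulEquiv).mpr h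

lemma unique_factor {p l1 l2 : MvPolynomial (Fin 2) k} {n m : ℕ}
    (hp : p.IsHomogeneous n) (hp0 : p ≠ 0)
    (h1 : l1.IsHomogeneous 1) (h10 : l1 ≠ 0)
    (h2 : l2.IsHomogeneous 1) (h20 : l2 ≠ 0)
    (hnm : n < 2 * m) (hd1 : l1 ^ m ∣ p) (hd2 : l2 ^ m ∣ p) : l1 ∣ l2 := by
  by_contra hnd
  have hnd' : ¬ l2 ∣ l1 := by
    intro hdd
    obtain ⟨c, hc0, hcc⟩ := linear_dvd h2 h1 h10 hdd
    apply hnd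
    refine ⟨C c⁻¹, ?_⟩
    rw [hcc, mul_comm, ← mul_assoc, ← C_mul, inv_mul_cancel₀ hc0, C_1, one_mul]
  obtain ⟨g, hg⟩ := hd1
  have hprime2 : Prime l2 := linear_prime h2 h20
  have hnl : ¬ l2 ∣ l1 ^ m := fun hdd => hnd' (hprime2.dvd_of_dvd_pow hdd)
  have hdg : l2 ^ m ∣ g := hprime2.pow_dvd_of_dvd_mul_left m hnl (hg ▸ hd2)
  have hl1m : (l1 ^ m).IsHomogeneous m := by simpa using h1.pow m
  obtain ⟨j1, hj1, hj1e⟩ := factor_homog hp hl1m hg hp0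
  have hg0 : g ≠ 0 := fun h0 => hp0 (by rw [hg, h0, mul_zero])
  obtain ⟨g2, hg2⟩ := hdg
  have hl2m : (l2 ^ m).IsHomogeneous m := by simpa using h2.pow m
  obtain ⟨j2, hj2, hj2e⟩ := factor_homog hj1 hl2m hg2 hg0
  omega

lemma wronskian_zero [CharZero k] {P Q : Polynomial k} (hP : P ≠ 0) (hQ : Q ≠ 0)
    (h : P * Polynomial.derivative Q = Polynomial.derivative P * Q) :
    ∃ c : k, c ≠ 0 ∧ P = Polynomial.C c * Q := by
  classical
  set G := GCDMonoid.gcd P Q with hG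
  have hG0 : G ≠ 0 := fun h0 => hP ((gcd_eq_zero_iff _ _).mp h0).1
  set A := P / G with hA
  set B := Q / G with hB
  have hPA : P = G * A := (EuclideanDomain.mul_div_cancel' hG0 (gcd_dvd_left P Q)).symm
  have hQB : Q = G * B := (EuclideanDomain.mul_div_cancel' hG0 (gcd_dvd_right P Q)).symm
  have hA0 : A ≠ 0 := fun h0 => hP (by rw [hPA, h0, mul_zero])
  have hB0 : B ≠ 0 := fun h0 => hQ (by rw [hQB, h0, mul_zero])
  have hcop : IsCoprime A B := isCoprime_div_gcd_div_gcd hQ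
  have hkey : A * Polynomial.derivative B = Polynomial.derivative A * B := by
    have hexp : G * G * (A * Polynomial.derivative B) = G * G * (Polynomial.derivative A * B) := by
      have hh := h
      rw [hPA, hQB, Polynomial.derivative_mul, Polynomial.derivative_mul] at hh
      ring_nf at hh ⊢
      linear_combination hh
    exact mul_left_cancel₀ (mul_ne_zero hG0 hG0) hexp
  have hAd : A ∣ Polynomial.derivative A := by
    have h1 : A ∣ Polynomial.derivative A * B := ⟨Polynomial.derivative B, hkey.symm⟩
    exact hcop.dvd_of_dvd_mul_right h1
  have hA' : Polynomial.derivative A = 0 := by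
    by_contra hA'
    exact absurd ((Polynomial.degree_le_of_dvd hAd hA').trans_lt
      (Polynomial.degree_derivative_lt hA0)) (lt_irrefl _)
  have hBd : B ∣ Polynomial.derivative B := by
    have h1 : B ∣ A * Polynomial.derivative B := ⟨Polynomial.derivative A, by rw [hkey]; ring⟩
    exact hcop.symm.dvd_of_dvd_mul_left h1
  have hB' : Polynomial.derivative B = 0 := by
    by_contra hB'
    exact absurd ((Polynomial.degree_le_of_dvd hBd hB').trans_lt
      (Polynomial.degree_derivative_lt hB0)) (lt_irrefl _)
  obtain ⟨a, hAa⟩ := Polynomial.natDegree_eq_zero.mp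
    (Polynomial.natDegree_eq_zero_of_derivative_eq_zero hA')
  obtain ⟨b, hBb⟩ := Polynomial.natDegree_eq_zero.mp
    (Polynomial.natDegree_eq_zero_of_derivative_eq_zero hB')
  have ha0 : a ≠ 0 := fun h0 => hA0 (by rw [← hAa, h0, map_zero])
  have hb0 : b ≠ 0 := fun h0 => hB0 (by rw [← hBb, h0, map_zero])
  refine ⟨a / b, div_ne_zero ha0 hb0, ?_⟩
  rw [hPA, hQB, ← hAa, ← hBb,
    show Polynomial.C (a/b) * (G * Polynomial.C b) = G * (Polynomial.C (a/b) * Polynomial.C b)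
      from by ring, ← Polynomial.C_mul, div_mul_cancel₀ _ hb0]

lemma D_linear (aa bb : k) :
    D (C aa * X 0 + C bb * X 1) = Polynomial.C aa * Polynomial.X + Polynomial.C bb := by
  simp [D, Polynomial.algebraMap_eq]

lemma D_C (t : k) : D (C t : MvPolynomial (Fin 2) k) = Polynomial.C t := by
  simp [D, Polynomial.algebraMap_eq]

lemma double_root_eval {F h : Polynomial k} {α : k}
    (hF : F = (Polynomial.X - Polynomial.C α) ^ 2 * h) :
    F.eval α = 0 ∧ (Polynomial.derivative F).eval α = 0 := by
  subst hF
  constructor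
  · simp
  · simp [Polynomial.derivative_mul, Polynomial.derivative_pow]

lemma pair [CharZero k] {d : ℕ} (hd : 2 ≤ d) {p q : MvPolynomial (Fin 2) k}
    (hph : p.IsHomogeneous d) (hqh : q.IsHomogeneous d)
    (hq : ∃ l h : MvPolynomial (Fin 2) k, l.IsHomogeneous 1 ∧ l ≠ 0 ∧ q = l ^ (d / 2 + 1) * h)
    (hall : ∀ t : k, ∃ l h : MvPolynomial (Fin 2) k,
      l.IsHomogeneous 1 ∧ l ≠ 0 ∧ p + C t * q = l ^ (d / 2 + 1) * h) :
    ∃ l : MvPolynomial (Fin 2) k, l.IsHomogeneous 1 ∧ l ≠ 0 ∧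
      l ^ (d / 2 + 1) ∣ p ∧ l ^ (d / 2 + 1) ∣ q := by
  set m := d / 2 + 1 with hm
  have hm2 : 2 ≤ m := by omega
  choose l h hlh hl0 heq using hall
  have hdvd : ∀ t : k, (l t) ^ m ∣ p + C t * q := fun t => ⟨h t, heq t⟩
  by_cases hcase : ∃ t s : k, t ≠ s ∧ l t ∣ l s
  · obtain ⟨t, s, hts, hls⟩ := hcase
    have h1 : (l t) ^ m ∣ p + C t * q := hdvd t
    have h2 : (l t) ^ m ∣ p + C s * q :=
      dvd_trans (pow_dvd_pow_of_dvd hls m) (hdvd s)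
    have h3 : (l t) ^ m ∣ C (s - t) * q := by
      have he : C (s - t) * q = (p + C s * q) - (p + C t * q) := by
        rw [map_sub]; ring
      rw [he]
      exact dvd_sub h2 h1
    have hst : (s - t) ≠ 0 := sub_ne_zero.mpr (Ne.symm hts)
    have h4 : (l t) ^ m ∣ q := by
      have he : q = C (s - t)⁻¹ * (C (s - t) * q) := by
        rw [← mul_assoc, ← C_mul, inv_mul_cancel₀ hst, C_1, one_mul]
      rw [he]
      exact Dvd.dvd.mul_left h3 _
    refine ⟨l t, hlh t, hl0 t, ?_, h4⟩
    have h5 : (l t) ^ m ∣ C t * q := Dvd.dvd.mul_left h4 _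
    have he : p = (p + C t * q) - C t * q := by ring
    rw [he]
    exact dvd_sub h1 h5
  · push_neg at hcase
    set a : k → k := fun t => coeff (Finsupp.single 0 1) (l t) with ha
    set b : k → k := fun t => coeff (Finsupp.single 1 1) (l t) with hb
    have hrep : ∀ t, l t = C (a t) * X 0 + C (b t) * X 1 := fun t => linear_rep (hlh t)
    have hzero_sub : ∀ t s : k, a t = 0 → a s = 0 → t = s := by
      intro t s h0t h0s
      by_contra hts
      apply hcase t s hts
      have hbt : b t ≠ 0 := by
        intro hb0
        apply hl0 t
        rw [hrep t, h0t, hb0]; simp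
      refine ⟨C (b s / b t), ?_⟩
      rw [hrep t, hrep s, h0t, h0s]
      simp only [map_zero, zero_mul, zero_add]
      rw [mul_comm (C (b t) * X 1) _, ← mul_assoc, ← C_mul, div_mul_cancel₀ _ hbt]
    have hTinf : {t : k | a t ≠ 0}.Infinite := by
      have hfin : {t : k | a t = 0}.Finite :=
        Set.Subsingleton.finite (fun t ht s hs => hzero_sub t s ht hs)
      have h' := hfin.infinite_compl
      have hcompl : {t : k | a t = 0}ᶜ = {t : k | a t ≠ 0} := by
        ext t; simp
      rwa [hcompl] at h'
    have hinj : Set.InjOn (fun t => -(b t / a t)) {t : k | a t ≠ 0} := by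
      intro t ht s hs he
      by_contra hts
      apply hcase t s hts
      have hat : a t ≠ 0 := ht
      have has : a s ≠ 0 := hs
      have hba : b t * a s = b s * a t := by
        simp only [neg_inj] at he
        rw [div_eq_div_iff hat has] at he
        exact he
      refine ⟨C (a s / a t), ?_⟩
      have e1 : a t * (a s / a t) = a s := by field_simp
      have e2 : b t * (a s / a t) = b s := by
        field_simp
        linear_combination hba
      have E1 : (C (a t) : MvPolynomial (Fin 2) k) * C (a s / a t) = C (a s) := by
        rw [← C_mul, e1]
      have E2 : (C (b t) : MvPolynomial (Fin 2) k) * C (a s / a t) = C (b s) := by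
        rw [← C_mul, e2]
      rw [hrep s, hrep t]
      linear_combination (-(X 0 : MvPolynomial (Fin 2) k)) * E1 + (-(X 1 : MvPolynomial (Fin 2) k)) * E2
    set P := D p with hP
    set Q := D q with hQ
    have hroot : ∀ t ∈ {t : k | a t ≠ 0},
        (P * Polynomial.derivative Q - Polynomial.derivative P * Q).IsRoot (-(b t / a t)) := by
      intro t ht
      have hat : a t ≠ 0 := ht
      set α := -(b t / a t) with hα
      have haα : a t * α = -(b t) := by
        rw [hα]; field_simp
      have hDl : D (l t) = Polynomial.C (a t) * (Polynomial.X - Polynomial.C α) := by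
        rw [hrep t, D_linear, mul_sub, ← Polynomial.C_mul, haα, map_neg, sub_neg_eq_add]
      have hF : D (p + C t * q) = P + Polynomial.C t * Q := by
        rw [map_add, map_mul, D_C]
      have h2 : (Polynomial.X - Polynomial.C α) ^ 2 ∣ P + Polynomial.C t * Q := by
        have hdvd2 : (l t) ^ 2 ∣ p + C t * q := dvd_trans (pow_dvd_pow _ hm2) (hdvd t)
        have hmapped := map_dvd (D : MvPolynomial (Fin 2) k →ₐ[k] Polynomial k) hdvd2
        rw [map_pow, hDl, hF, mul_pow] at hmapped
        exact dvd_trans (Dvd.intro_left _ rfl) hmapped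
      obtain ⟨hh, hhh⟩ := h2
      obtain ⟨hev1, hev2⟩ := double_root_eval hhh
      have e1 : P.eval α + t * Q.eval α = 0 := by
        simpa using hev1
      have e2 : (Polynomial.derivative P).eval α + t * (Polynomial.derivative Q).eval α = 0 := by
        have hder : Polynomial.derivative (P + Polynomial.C t * Q)
            = Polynomial.derivative P + Polynomial.C t * Polynomial.derivative Q := by
          rw [Polynomial.derivative_add, Polynomial.derivative_C_mul]
        rw [hder] at hev2
        simpa using hev2
      show (P * Polynomial.derivative Q - Polynomial.derivative P * Q).eval α = 0
      simp only [Polynomial.eval_sub, Polynomial.eval_mul]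
      linear_combination (Polynomial.derivative Q).eval α * e1 - Q.eval α * e2
    have hW0 : P * Polynomial.derivative Q - Polynomial.derivative P * Q = 0 := by
      apply Polynomial.eq_zero_of_infinite_isRoot
      apply Set.Infinite.mono _ (hTinf.image hinj)
      rintro x ⟨t, ht, rfl⟩
      exact hroot t ht
    by_cases hQ0 : Q = 0
    · have hq0 : q = 0 := D_eq_zero hqh hQ0
      refine ⟨l 0, hlh 0, hl0 0, ?_, by rw [hq0]; exact dvd_zero _⟩
      have h1 := hdvd 0
      rwa [map_zero, zero_mul, add_zero] at h1
    · by_cases hP0 : P = 0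
      · have hp0 : p = 0 := D_eq_zero hph hP0
        obtain ⟨l', h', hl'h, hl'0, hq'⟩ := hq
        exact ⟨l', hl'h, hl'0, by rw [hp0]; exact dvd_zero _, ⟨h', hq'⟩⟩
      · obtain ⟨c, hc0, hPQ⟩ := wronskian_zero hP0 hQ0 (sub_eq_zero.mp hW0)
        have hDpq : D (p - C c * q) = 0 := by
          rw [map_sub, map_mul, D_C, ← hP, ← hQ, hPQ, sub_self]
        have hpq : p = C c * q := sub_eq_zero.mp (D_eq_zero (hph.sub (hqh.C_mul c)) hDpq)
        obtain ⟨l', h', hl'h, hl'0, hq'⟩ := hq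
        have hdq : l' ^ m ∣ q := ⟨h', hq'⟩
        exact ⟨l', hl'h, hl'0, by rw [hpq]; exact Dvd.dvd.mul_left hdq _, hdq⟩

lemma global [CharZero k] {d : ℕ} (hd : 2 ≤ d) {L : Submodule k (MvPolynomial (Fin 2) k)}
    (hLd : L ≤ homogeneousSubmodule (Fin 2) k d) (hLN : InNullcone k d L)
    {p₀ l₀ : MvPolynomial (Fin 2) k} (hp₀L : p₀ ∈ L) (hp₀0 : p₀ ≠ 0)
    (hl₀ : l₀.IsHomogeneous 1) (hl₀0 : l₀ ≠ 0) (hl₀d : l₀ ^ (d / 2 + 1) ∣ p₀) :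
    ∀ q ∈ L, l₀ ^ (d / 2 + 1) ∣ q := by
  intro q hqL
  have hall : ∀ t : k, ∃ l h : MvPolynomial (Fin 2) k,
      l.IsHomogeneous 1 ∧ l ≠ 0 ∧ p₀ + C t * q = l ^ (d / 2 + 1) * h := by
    intro t
    apply hLN
    have he : C t * q = t • q := (smul_eq_C_mul q t).symm
    rw [he]
    exact L.add_mem hp₀L (L.smul_mem t hqL)
  obtain ⟨l, hl, hl0, hdp, hdq⟩ := pair hd ((mem_homogeneousSubmodule _ _).mp (hLd hp₀L))
    ((mem_homogeneousSubmodule _ _).mp (hLd hqL)) (hLN q hqL) hall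
  have hldvd : l₀ ∣ l := unique_factor ((mem_homogeneousSubmodule _ _).mp (hLd hp₀L)) hp₀0
    hl₀ hl₀0 hl hl0 (by omega) hl₀d hdp
  exact dvd_trans (pow_dvd_pow_of_dvd hldvd _) hdq

lemma mem_M {d : ℕ} (hd : 2 ≤ d) {l q : MvPolynomial (Fin 2) k} (hl : l.IsHomogeneous 1)
    (hq : q.IsHomogeneous d) (hdvd : l ^ (d / 2 + 1) ∣ q) :
    q ∈ Submodule.map (LinearMap.mulLeft k (l ^ (d / 2 + 1)))
      (homogeneousSubmodule (Fin 2) k (d - (d / 2 + 1))) := by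
  by_cases hq0 : q = 0
  · subst hq0
    exact ⟨0, Submodule.zero_mem _, by simp⟩
  · obtain ⟨g, hg⟩ := hdvd
    have hlm : (l ^ (d / 2 + 1)).IsHomogeneous (d / 2 + 1) := by simpa using hl.pow _
    obtain ⟨j, hj, hje⟩ := factor_homog hq hlm hg hq0
    have hjval : j = d - (d / 2 + 1) := by omega
    refine ⟨g, ?_, ?_⟩
    · show g ∈ homogeneousSubmodule (Fin 2) k (d - (d / 2 + 1))
      exact (mem_homogeneousSubmodule _ _).mpr (hjval ▸ hj)
    · rw [LinearMap.mulLeft_apply]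
      exact hg.symm

lemma M_le {d : ℕ} (hd : 2 ≤ d) {l : MvPolynomial (Fin 2) k} (hl : l.IsHomogeneous 1) :
    Submodule.map (LinearMap.mulLeft k (l ^ (d / 2 + 1)))
      (homogeneousSubmodule (Fin 2) k (d - (d / 2 + 1)))
      ≤ homogeneousSubmodule (Fin 2) k d := by
  rintro p ⟨g, hg, rfl⟩
  rw [LinearMap.mulLeft_apply, mem_homogeneousSubmodule]
  have hlm : (l ^ (d / 2 + 1)).IsHomogeneous (d / 2 + 1) := by simpa using hl.pow _
  have hmul := hlm.mul ((mem_homogeneousSubmodule _ _).mp hg)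
  have harith : d / 2 + 1 + (d - (d / 2 + 1)) = d := by omega
  rwa [harith] at hmul

lemma nullcone_M {d : ℕ} {l : MvPolynomial (Fin 2) k} (hl : l.IsHomogeneous 1) (hl0 : l ≠ 0) :
    InNullcone k d (Submodule.map (LinearMap.mulLeft k (l ^ (d / 2 + 1)))
      (homogeneousSubmodule (Fin 2) k (d - (d / 2 + 1)))) := by
  rintro p ⟨g, hg, rfl⟩
  exact ⟨l, g, hl, hl0, by rw [LinearMap.mulLeft_apply]⟩

end Stmt12Aux

open Stmt12Aux

/-- Let `k` be algebraically closed of characteristic 0 and `d ≥ 2`. A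
linear subspace `L ⊆ R_d` lying in the `SL₂`-nullcone is maximal among such subspaces iff
`L = l^([d/2]+1)·R_{d-[d/2]-1}` for some nonzero linear form `l`. -/
theorem stmt_12 (k : Type*) [Field k] [IsAlgClosed k] [CharZero k] (d : ℕ) (hd : 2 ≤ d)
    (L : Submodule k (MvPolynomial (Fin 2) k))
    (hLd : L ≤ homogeneousSubmodule (Fin 2) k d)
    (hLN : InNullcone k d L) :
    (∀ L' : Submodule k (MvPolynomial (Fin 2) k),
        L' ≤ homogeneousSubmodule (Fin 2) k d → InNullcone k d L' → L ≤ L' → L' = L) ↔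
    ∃ l : MvPolynomial (Fin 2) k, l.IsHomogeneous 1 ∧ l ≠ 0 ∧
      L = Submodule.map (LinearMap.mulLeft k (l ^ (d / 2 + 1)))
            (homogeneousSubmodule (Fin 2) k (d - (d / 2 + 1))) := by
  constructor
  · intro hmax
    by_cases hex : ∃ p₀ ∈ L, p₀ ≠ (0 : MvPolynomial (Fin 2) k)
    · obtain ⟨p₀, hp₀L, hp₀0⟩ := hex
      obtain ⟨l₀, h₀, hl₀, hl₀0, hp₀eq⟩ := hLN p₀ hp₀L
      have hdvd0 : l₀ ^ (d / 2 + 1) ∣ p₀ := ⟨h₀, hp₀eq⟩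
      have hglob := global hd hLd hLN hp₀L hp₀0 hl₀ hl₀0 hdvd0
      refine ⟨l₀, hl₀, hl₀0, ?_⟩
      have hLM : L ≤ Submodule.map (LinearMap.mulLeft k (l₀ ^ (d / 2 + 1)))
          (homogeneousSubmodule (Fin 2) k (d - (d / 2 + 1))) := fun q hq =>
        mem_M hd hl₀ ((mem_homogeneousSubmodule _ _).mp (hLd hq)) (hglob q hq)
      exact (hmax _ (M_le hd hl₀) (nullcone_M hl₀ hl₀0) hLM).symm
    · push_neg at hex
      exfalso
      have h1 := hmax (Submodule.map (LinearMap.mulLeft k ((X 0 : MvPolynomial (Fin 2) k) ^ (d / 2 + 1)))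
        (homogeneousSubmodule (Fin 2) k (d - (d / 2 + 1))))
        (M_le hd (isHomogeneous_X _ 0)) (nullcone_M (isHomogeneous_X _ 0) (X_ne_zero 0))
        (fun q hq => by rw [hex q hq]; exact Submodule.zero_mem _)
      have hmem : (X 0 : MvPolynomial (Fin 2) k) ^ (d / 2 + 1) * X 0 ^ (d - (d / 2 + 1)) ∈
          Submodule.map (LinearMap.mulLeft k ((X 0 : MvPolynomial (Fin 2) k) ^ (d / 2 + 1)))
            (homogeneousSubmodule (Fin 2) k (d - (d / 2 + 1))) :=
        ⟨X 0 ^ (d - (d / 2 + 1)), (mem_homogeneousSubmodule _ _).mpr (isHomogeneous_X_pow _ _),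
          by rw [LinearMap.mulLeft_apply]⟩
      rw [h1] at hmem
      exact (mul_ne_zero (pow_ne_zero _ (X_ne_zero 0)) (pow_ne_zero _ (X_ne_zero 0)))
        (hex _ hmem)
  · rintro ⟨l, hl, hl0, rfl⟩
    intro L' hL'd hL'N hLL'
    refine le_antisymm ?_ hLL'
    intro q hqL'
    have hp₀mem : l ^ (d / 2 + 1) * X 0 ^ (d - (d / 2 + 1)) ∈
        Submodule.map (LinearMap.mulLeft k (l ^ (d / 2 + 1)))
          (homogeneousSubmodule (Fin 2) k (d - (d / 2 + 1))) :=
      ⟨X 0 ^ (d - (d / 2 + 1)), (mem_homogeneousSubmodule _ _).mpr (isHomogeneous_X_pow _ _),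
        by rw [LinearMap.mulLeft_apply]⟩
    have hp₀L' := hLL' hp₀mem
    have hp₀0 : l ^ (d / 2 + 1) * X 0 ^ (d - (d / 2 + 1)) ≠ 0 :=
      mul_ne_zero (pow_ne_zero _ hl0) (pow_ne_zero _ (X_ne_zero 0))
    have hglob := global hd hL'd hL'N hp₀L' hp₀0 hl hl0 (dvd_mul_right _ _)
    exact mem_M hd hl ((mem_homogeneousSubmodule _ _).mp (hL'd hqL')) (hglob q hqL')
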